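/- arXiv:2301.13781 — 3 statements merged into one kernel-verified Lean document; each statement's English description precedes it below -/
import Mathlib

section
/- For any s ≥ 0 there is a constant C = C(s, d) such that |M_h(ξ)^{2s} − |ξ|^{2s}| ≤ C h^2 |ξ|^{2s+2} for all ξ ∈ ℝ^d and all h > 0, where M_h(ξ)^2 = ∑_{j=1}^d (4/h^2) sin^2(ξ_j h / 2). -/
open Real
open scoped BigOperators

noncomputable section

abbrev Ed (d : ℕ) := EuclideanSpace ℝ (Fin d)

/-- The symbol `M_h(ξ)² = ∑_j (4/h²) sin²(ξ_j h/2)` of the discrete Laplacian. -/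
def Msq (d : ℕ) (h : ℝ) (ξ : Ed d) : ℝ :=
  ∑ j : Fin d, (4 / h ^ 2) * Real.sin (ξ j * h / 2) ^ 2

lemma poly_aux (n : ℕ) {u : ℝ} (h0 : 0 ≤ u) (h1 : u ≤ 1) :
    1 - u ^ n ≤ n * (1 - u) := by
  induction n with
  | zero => simp
  | succ n ih =>
    have hun : u ^ n ≤ 1 := pow_le_one₀ h0 h1
    have hsucc : u ^ (n + 1) = u ^ n * u := pow_succ u n
    push_cast
    nlinarith

lemma sin_sq_lb (x : ℝ) : x ^ 2 - Real.sin x ^ 2 ≤ x ^ 4 := by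
  wlog hx : 0 ≤ x with H
  · have := H (-x) (by linarith)
    rw [Real.sin_neg] at this; nlinarith [this]
  rcases le_or_gt x 1 with h1 | h1
  · rcases eq_or_lt_of_le hx with rfl | hx0
    · simp
    · have h2 := Real.sin_gt_sub_cube hx0
      have h3 := Real.sin_le hx
      nlinarith
  · have h2 : 1 ≤ x ^ 2 := by nlinarith
    nlinarith [sq_nonneg (Real.sin x), sq_nonneg x, h2]

set_option maxHeartbeats 1000000
/-- Symbol error estimate: for `s ≥ 0` there is `C = C(s,d)` with
`|M_h(ξ)^{2s} − |ξ|^{2s}| ≤ C h² |ξ|^{2s+2}` for all `ξ ∈ ℝ^d` and `h > 0`.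
Here `M_h(ξ)^{2s} = (M_h(ξ)²)^s`. -/
theorem stmt2 (d : ℕ) (s : ℝ) (hs : 0 ≤ s) :
    ∃ C : ℝ, 0 < C ∧
      ∀ h : ℝ, 0 < h → ∀ ξ : Ed d,
        |Msq d h ξ ^ s - ‖ξ‖ ^ (2 * s)| ≤ C * h ^ 2 * ‖ξ‖ ^ (2 * s + 2) := by
  rcases eq_or_lt_of_le hs with rfl | hs0
  · refine ⟨1, one_pos, fun h hh ξ => ?_⟩
    rw [mul_zero, Real.rpow_zero, Real.rpow_zero]
    simp only [sub_self, abs_zero, zero_add]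
    positivity
  set n := ⌈s⌉₊ with hn
  have hns : s ≤ (n : ℝ) := Nat.le_ceil s
  have hn1 : 1 ≤ n := Nat.ceil_pos.mpr hs0
  refine ⟨(n : ℝ) + 1, by positivity, fun h hh ξ => ?_⟩
  rcases (norm_nonneg ξ).eq_or_lt with h0 | hN
  · obtain rfl : ξ = 0 := norm_eq_zero.mp h0.symm
    have hB : Msq d h (0 : Ed d) = 0 := by simp [Msq]
    rw [hB, Real.zero_rpow (ne_of_gt hs0), norm_zero,
      Real.zero_rpow (by positivity : (2*s : ℝ) ≠ 0),
      Real.zero_rpow (by positivity : (2*s+2 : ℝ) ≠ 0)]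
    simp
  -- main case ‖ξ‖ > 0
  set A : ℝ := ∑ j : Fin d, ξ j ^ 2 with hAdef
  set B : ℝ := Msq d h ξ with hBdef
  have hA2 : ‖ξ‖ ^ (2:ℕ) = A := by
    rw [EuclideanSpace.norm_eq, Real.sq_sqrt (by positivity)]
    simp [Real.norm_eq_abs, sq_abs, hAdef]
  have hApos : 0 < A := by
    rw [← hA2]; positivity
  have hB0 : 0 ≤ B := Finset.sum_nonneg fun j _ => by positivity
  have hBA : B ≤ A := by
    refine Finset.sum_le_sum fun j _ => ?_
    have key := Real.sin_sq_le_sq (x := ξ j * h / 2)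
    have e1 : (4 / h ^ 2) * ((ξ j * h / 2) ^ 2) = ξ j ^ 2 := by
      field_simp; ring
    nlinarith [mul_le_mul_of_nonneg_left key (by positivity : (0:ℝ) ≤ 4 / h ^ 2)]
  have hAB : A - B ≤ h ^ 2 / 4 * A ^ 2 := by
    have step : A - B ≤ ∑ j : Fin d, h ^ 2 / 4 * (ξ j ^ 2) ^ 2 := by
      rw [hAdef, hBdef, Msq, ← Finset.sum_sub_distrib]
      refine Finset.sum_le_sum fun j _ => ?_
      have key := sin_sq_lb (ξ j * h / 2)
      have e1 : (4 / h ^ 2) * ((ξ j * h / 2) ^ 2) = ξ j ^ 2 := by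
        field_simp; ring
      have e2 : (4 / h ^ 2) * ((ξ j * h / 2) ^ 4) = h ^ 2 / 4 * (ξ j ^ 2) ^ 2 := by
        field_simp; ring
      nlinarith [mul_le_mul_of_nonneg_left key (by positivity : (0:ℝ) ≤ 4 / h ^ 2)]
    refine step.trans ?_
    rw [← Finset.mul_sum, hAdef]
    have hsum : ∑ j : Fin d, (ξ j ^ 2) ^ 2 ≤ (∑ j : Fin d, ξ j ^ 2) ^ 2 :=
      Finset.sum_sq_le_sq_sum_of_nonneg fun j _ => sq_nonneg _
    have : (0:ℝ) ≤ h ^ 2 / 4 := by positivity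
    nlinarith
  -- rpow identities
  have hN2 : ‖ξ‖ ^ (2:ℝ) = A := by
    rw [show (2:ℝ) = ((2:ℕ):ℝ) by norm_num, Real.rpow_natCast, hA2]
  have hNs : ‖ξ‖ ^ (2 * s) = A ^ s := by
    rw [Real.rpow_mul (norm_nonneg ξ), hN2]
  have hNs2 : ‖ξ‖ ^ (2 * s + 2) = A ^ s * A := by
    rw [Real.rpow_add hN, hNs, hN2]
  have hBs : B ^ s ≤ A ^ s := Real.rpow_le_rpow hB0 hBA hs
  rw [hNs, hNs2, abs_of_nonpos (by linarith), neg_sub]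
  -- main estimate
  set u : ℝ := B / A with hu
  have hu0 : 0 ≤ u := div_nonneg hB0 hApos.le
  have hu1 : u ≤ 1 := (div_le_one hApos).mpr hBA
  have hBu : B = A * u := by rw [hu, mul_div_cancel₀ _ (ne_of_gt hApos)]
  have hBs' : B ^ s = A ^ s * u ^ s := by
    rw [hBu, Real.mul_rpow hApos.le hu0]
  have hus : u ^ (n:ℕ) ≤ u ^ s := by
    rcases eq_or_lt_of_le hu0 with h0' | h0'
    · rw [← h0', Real.zero_rpow (ne_of_gt hs0), zero_pow (by omega : n ≠ 0)]
    · calc u ^ (n:ℕ) = u ^ ((n:ℕ):ℝ) := (Real.rpow_natCast u n).symm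
        _ ≤ u ^ s := Real.rpow_le_rpow_of_exponent_ge h0' hu1 hns
  have hpoly := poly_aux n hu0 hu1
  have h1u : 1 - u ≤ h ^ 2 / 4 * A := by
    have e3 : (1 - u) * A = A - B := by
      rw [hu]; field_simp
    have := hAB
    nlinarith [hApos]
  have hAs : (0:ℝ) ≤ A ^ s := Real.rpow_nonneg hApos.le s
  have c1 : A ^ s - B ^ s = A ^ s * (1 - u ^ s) := by rw [hBs']; ring
  have c2 : A ^ s * (1 - u ^ s) ≤ A ^ s * (1 - u ^ (n:ℕ)) := by
    apply mul_le_mul_of_nonneg_left (by linarith) hAs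
  have c3 : A ^ s * (1 - u ^ (n:ℕ)) ≤ A ^ s * ((n:ℝ) * (1 - u)) :=
    mul_le_mul_of_nonneg_left hpoly hAs
  have c4 : A ^ s * ((n:ℝ) * (1 - u)) ≤ A ^ s * ((n:ℝ) * (h ^ 2 / 4 * A)) := by
    apply mul_le_mul_of_nonneg_left _ hAs
    apply mul_le_mul_of_nonneg_left h1u (by positivity)
  have c5 : A ^ s * ((n:ℝ) * (h ^ 2 / 4 * A)) ≤ ((n:ℝ) + 1) * h ^ 2 * (A ^ s * A) := by
    have hX : (0:ℝ) ≤ A ^ s * A * h ^ 2 := by positivity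
    have hn0 : (0:ℝ) ≤ (n:ℝ) := Nat.cast_nonneg n
    nlinarith [mul_le_mul_of_nonneg_right (show (n:ℝ)/4 ≤ (n:ℝ)+1 by linarith) hX]
  linarith
end
end

section
/- Let t + l > d/2 with t, l ≥ 0 and h ∈ (0, 1]. Then there is a constant C = C(d, t, l) such that sup over ξ ∈ (−π/h, π/h)^d of ∑_{ζ ∈ (2π/h)ℤ^d \ {0}} 1 / (h^{2l} |ξ + ζ|^{2(t+l)}) is at most C h^{2t}. -/
open Real
open scoped BigOperators

noncomputable section

/-- The lattice point `h·z ∈ ℝ^d` for `z ∈ ℤ^d`. -/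
def latPt (d : ℕ) (h : ℝ) (z : Fin d → ℤ) : Ed d :=
  (EuclideanSpace.equiv (Fin d) ℝ).symm (fun j => h * (z j : ℝ))

/-- Summability of `n ↦ (1+n²)^(-q)` over `ℤ` for `q > 1/2`. -/
lemma sumG {q : ℝ} (hq : 1 / 2 < q) :
    Summable fun n : ℤ => ((1 : ℝ) + (n : ℝ) ^ 2) ^ (-q) := by
  have h2q : 1 < 2 * q := by linarith
  have hbase := (Real.summable_one_div_int_add_rpow (1/2) (2*q)).mpr h2q
  refine (hbase.mul_left ((2:ℝ) ^ q)).of_nonneg_of_le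
    (fun n => by positivity) (fun n => ?_)
  have h1 : (0:ℝ) < 1 + (n:ℝ)^2 := by positivity
  have hne : ((n:ℝ) + 1/2) ≠ 0 := by
    intro hc
    have h2 : ((2*n+1 : ℤ) : ℝ) = 0 := by push_cast; linarith
    have : (2*n+1 : ℤ) = 0 := by exact_mod_cast h2
    omega
  have hpos : (0:ℝ) < |(n:ℝ) + 1/2| := abs_pos.mpr hne
  have habs : |(n:ℝ) + 1/2| ^ (2*q) = (((n:ℝ)+1/2)^2) ^ q := by
    rw [← sq_abs, ← Real.rpow_natCast |(n:ℝ)+1/2| 2, ← Real.rpow_mul (abs_nonneg _)]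
    norm_num
  have key : |(n:ℝ) + 1/2| ^ (2*q) ≤ (2:ℝ)^q * (1 + (n:ℝ)^2) ^ q := by
    rw [habs, ← Real.mul_rpow (by norm_num) h1.le]
    apply Real.rpow_le_rpow (by positivity) _ (by linarith)
    nlinarith [sq_nonneg ((n:ℝ) - 1/2)]
  rw [Real.rpow_neg h1.le, mul_one_div, ← one_div,
    div_le_div_iff₀ (by positivity) (by positivity)]
  simpa using key

/-- Summability of the product series on `ℤ^d`. -/
lemma sumPi (d : ℕ) {q : ℝ} (hq : 1 / 2 < q) :
    Summable fun z : Fin d → ℤ => ∏ j, ((1 : ℝ) + (z j : ℝ) ^ 2) ^ (-q) := by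
  induction d with
  | zero =>
      have he : (fun z : Fin 0 → ℤ => ∏ j, ((1 : ℝ) + (z j : ℝ) ^ 2) ^ (-q))
          = fun _ => 1 := funext fun z => by simp
      rw [he]
      haveI : Fintype (Fin 0 → ℤ) := Fintype.ofSubsingleton (fun i => i.elim0)
      exact summable_of_finite_support (Set.toFinite _)
  | succ n ih =>
      have h2 : Summable fun x : ℤ × (Fin n → ℤ) =>
          ((1 : ℝ) + (x.1 : ℝ) ^ 2) ^ (-q) * ∏ j, ((1 : ℝ) + (x.2 j : ℝ) ^ 2) ^ (-q) :=
        Summable.mul_of_nonneg (f := fun m : ℤ => ((1 : ℝ) + (m : ℝ) ^ 2) ^ (-q))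
          (g := fun z : Fin n → ℤ => ∏ j, ((1 : ℝ) + (z j : ℝ) ^ 2) ^ (-q)) (sumG hq) ih
          (fun _ => by positivity) (fun _ => Finset.prod_nonneg fun _ _ => by positivity)
      refine (Fin.consEquiv (fun _ : Fin (n + 1) => ℤ)).summable_iff.mp (h2.congr fun x => ?_)
      simp [Fin.consEquiv, Fin.prod_univ_succ]

lemma normLat (d : ℕ) (z : Fin d → ℤ) :
    ‖(latPt d 1 z : Ed d)‖ = Real.sqrt (∑ j, ((z j : ℝ)) ^ 2) := by
  rw [EuclideanSpace.norm_eq]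
  congr 1
  refine Finset.sum_congr rfl fun j _ => ?_
  show ‖(1 : ℝ) * (z j : ℝ)‖ ^ 2 = ((z j : ℝ)) ^ 2
  rw [one_mul, Real.norm_eq_abs, sq_abs]

lemma one_le_normLat {d : ℕ} {z : Fin d → ℤ} (hz : z ≠ 0) :
    1 ≤ ‖(latPt d 1 z : Ed d)‖ := by
  obtain ⟨j, hj⟩ := Function.ne_iff.mp hz
  rw [normLat]
  have h1 : (1:ℝ) ≤ ((z j : ℝ)) ^ 2 := by
    have ha : 1 ≤ |z j| := Int.one_le_abs (by simpa using hj)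
    have hb : (1:ℝ) ≤ |(z j : ℝ)| := by exact_mod_cast ha
    nlinarith [sq_abs ((z j : ℝ)), abs_nonneg ((z j : ℝ))]
  have h2 : ((z j : ℝ)) ^ 2 ≤ ∑ i, ((z i : ℝ)) ^ 2 :=
    Finset.single_le_sum (f := fun i => ((z i : ℝ)) ^ 2) (fun i _ => sq_nonneg _)
      (Finset.mem_univ j)
  have := Real.sqrt_le_sqrt (h1.trans h2)
  simpa using this

/-- Summability of the negative-power lattice sum for `p > d`. -/
lemma sumLat (d : ℕ) {p : ℝ} (hp : (d : ℝ) < p) :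
    Summable fun z : {z : Fin d → ℤ // z ≠ 0} => ‖(latPt d 1 z.1 : Ed d)‖ ^ (-p) := by
  rcases Nat.eq_zero_or_pos d with hd | hd
  · subst hd
    haveI : IsEmpty {z : Fin 0 → ℤ // z ≠ 0} :=
      ⟨fun z => z.2 (funext fun i => i.elim0)⟩
    exact summable_empty
  set q : ℝ := p / (2 * d) with hqdef
  have hd0 : (0:ℝ) < (d:ℝ) := by exact_mod_cast hd
  have hq : 1 / 2 < q := by
    rw [hqdef, lt_div_iff₀ (by positivity)]
    linarith
  have hsum : Summable fun z : {z : Fin d → ℤ // z ≠ 0} =>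
      (2:ℝ) ^ (p/2) * ∏ j, ((1 : ℝ) + (z.1 j : ℝ) ^ 2) ^ (-q) := by
    have h1 := (sumPi d hq).subtype {z : Fin d → ℤ | z ≠ 0}
    have h2 := h1.mul_left ((2:ℝ) ^ (p / 2))
    exact h2
  refine hsum.of_nonneg_of_le (fun z => by positivity) (fun z => ?_)
  set N := ‖(latPt d 1 z.1 : Ed d)‖ with hN
  have hN1 : 1 ≤ N := one_le_normLat z.2
  have hN0 : 0 < N := lt_of_lt_of_le one_pos hN1
  have hNsq : N ^ 2 = ∑ j, ((z.1 j : ℝ)) ^ 2 := by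
    rw [hN, normLat, Real.sq_sqrt (Finset.sum_nonneg fun j _ => sq_nonneg _)]
  -- ∏ (1+z_j²) ≤ (2 N²)^d
  have hprod : (∏ j, ((1:ℝ) + (z.1 j : ℝ) ^ 2)) ≤ (2 * N ^ 2) ^ (d:ℕ) := by
    have : (∏ j, ((1:ℝ) + (z.1 j : ℝ) ^ 2)) ≤ ∏ _j : Fin d, (2 * N ^ 2) := by
      apply Finset.prod_le_prod (fun j _ => by positivity)
      intro j _
      have h2 : ((z.1 j : ℝ)) ^ 2 ≤ N ^ 2 := by
        rw [hNsq]
        exact Finset.single_le_sum (f := fun i => ((z.1 i : ℝ)) ^ 2)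
          (fun i _ => sq_nonneg _) (Finset.mem_univ j)
      nlinarith
    simpa using this
  -- (∏ (1+z_j²))^q ≤ 2^(p/2) * N^p
  have hP0 : (0:ℝ) < ∏ j, ((1:ℝ) + (z.1 j : ℝ) ^ 2) :=
    Finset.prod_pos fun j _ => by positivity
  have hkey : (∏ j, ((1:ℝ) + (z.1 j : ℝ) ^ 2)) ^ q ≤ 2 ^ (p/2) * N ^ p := by
    have h1 : (∏ j, ((1:ℝ) + (z.1 j : ℝ) ^ 2)) ^ q ≤ ((2 * N ^ 2) ^ (d:ℕ)) ^ q :=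
      Real.rpow_le_rpow hP0.le hprod (by positivity)
    refine h1.trans_eq ?_
    have hc1 : (((2 * N ^ 2) : ℝ) ^ (d:ℕ)) ^ q = (2 * N ^ 2) ^ ((d:ℝ) * q) := by
      rw [← Real.rpow_natCast (2 * N ^ 2) d, ← Real.rpow_mul (by positivity)]
    have hdq : (d:ℝ) * q = p / 2 := by
      rw [hqdef]
      field_simp
    have hc2 : ((2:ℝ) * N ^ 2) ^ (p / 2) = 2 ^ (p/2) * N ^ p := by
      rw [Real.mul_rpow (by norm_num) (by positivity)]
      congr 1
      rw [← Real.rpow_natCast N 2, ← Real.rpow_mul hN0.le]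
      congr 1
      push_cast
      ring
    rw [hc1, hdq, hc2]
  -- conclude
  have hprpow : (∏ j, ((1:ℝ) + (z.1 j : ℝ) ^ 2) ^ (-q))
      = (∏ j, ((1:ℝ) + (z.1 j : ℝ) ^ 2)) ^ (-q) := by
    rw [← Real.finset_prod_rpow _ _ (fun j _ => by positivity)]
  rw [hprpow, Real.rpow_neg hP0.le, Real.rpow_neg hN0.le, inv_eq_one_div,
    inv_eq_one_div, mul_one_div, div_le_div_iff₀ (by positivity) (by positivity)]
  linarith [hkey]

/-- Componentwise lower bound on the shifted lattice norm. -/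
lemma normLB (d : ℕ) (h : ℝ) (h0 : 0 < h) (ξ : Ed d) (hξ : ∀ j, |ξ j| < π / h)
    (z : Fin d → ℤ) :
    (π / h) * ‖(latPt d 1 z : Ed d)‖ ≤ ‖ξ + latPt d (2 * π / h) z‖ := by
  have hπh : (0:ℝ) < π / h := by positivity
  rw [EuclideanSpace.norm_eq, EuclideanSpace.norm_eq, ← Real.sqrt_sq hπh.le,
    ← Real.sqrt_mul (sq_nonneg _)]
  apply Real.sqrt_le_sqrt
  rw [Finset.mul_sum]
  apply Finset.sum_le_sum
  intro j _
  have happ1 : ((latPt d 1 z : Ed d)) j = (1:ℝ) * (z j : ℝ) := rfl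
  have happ2 : (ξ + latPt d (2 * π / h) z) j = ξ j + (2 * π / h) * (z j : ℝ) := rfl
  rw [happ1, happ2, one_mul, Real.norm_eq_abs, Real.norm_eq_abs, sq_abs, sq_abs]
  have key : (π / h) * |(z j : ℝ)| ≤ |ξ j + (2 * π / h) * (z j : ℝ)| := by
    rcases eq_or_ne (z j) 0 with hz | hz
    · simp [hz]
    · have h1 : (1:ℝ) ≤ |(z j : ℝ)| := by
        have : 1 ≤ |z j| := Int.one_le_abs hz
        exact_mod_cast this
      have h2 := abs_sub_abs_le_abs_sub ((2 * π / h) * (z j : ℝ)) (-(ξ j))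
      rw [sub_neg_eq_add, abs_neg, add_comm] at h2
      have hw : |(2 * π / h) * (z j : ℝ)| = (2 * π / h) * |(z j : ℝ)| := by
        rw [abs_mul, abs_of_pos (by positivity)]
      have hxi := hξ j
      have h3 : π / h ≤ π / h * |(z j : ℝ)| := le_mul_of_one_le_right hπh.le h1
      have h4 : 2 * π / h * |(z j : ℝ)| = 2 * (π / h * |(z j : ℝ)|) := by ring
      linarith
  calc (π / h) ^ 2 * (z j : ℝ) ^ 2 = ((π / h) * |(z j : ℝ)|) ^ 2 := by
        rw [mul_pow, sq_abs]
    _ ≤ |ξ j + (2 * π / h) * (z j : ℝ)| ^ 2 := by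
        apply pow_le_pow_left₀ (by positivity) key
    _ = (ξ j + (2 * π / h) * (z j : ℝ)) ^ 2 := sq_abs _

/-- Dual-lattice tail sum estimate: for `t + l > d/2`, `t, l ≥ 0` and `h ∈ (0,1]`,
`∑_{ζ ∈ (2π/h)ℤ^d \ {0}} 1/(h^{2l}|ξ+ζ|^{2(t+l)}) ≤ C h^{2t}` uniformly over
`ξ ∈ (−π/h, π/h)^d`, with `C = C(d,t,l)`. -/
theorem stmt4 (d : ℕ) (t l : ℝ) (ht : 0 ≤ t) (hl : 0 ≤ l) (htl : (d : ℝ) / 2 < t + l) :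
    ∃ C : ℝ, 0 < C ∧
      ∀ h : ℝ, 0 < h → h ≤ 1 → ∀ ξ : Ed d, (∀ j, |ξ j| < π / h) →
        (∑' ζ : {z : Fin d → ℤ // z ≠ 0},
            1 / (h ^ (2 * l) * ‖ξ + latPt d (2 * π / h) ζ.1‖ ^ (2 * (t + l))))
          ≤ C * h ^ (2 * t) := by
  set p : ℝ := 2 * (t + l) with hpdef
  have hp0 : 0 ≤ p := by positivity
  have hpd : (d : ℝ) < p := by rw [hpdef]; linarith
  have hsumN := sumLat d hpd
  set S : ℝ := ∑' z : {z : Fin d → ℤ // z ≠ 0}, ‖(latPt d 1 z.1 : Ed d)‖ ^ (-p) with hSdef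
  have hS0 : 0 ≤ S := tsum_nonneg fun z => by positivity
  refine ⟨π ^ (-p) * S + 1, by positivity, ?_⟩
  intro h h0 h1 ξ hξ
  have hπh : (0:ℝ) < π / h := by positivity
  -- termwise bound
  have hterm : ∀ ζ : {z : Fin d → ℤ // z ≠ 0},
      1 / (h ^ (2 * l) * ‖ξ + latPt d (2 * π / h) ζ.1‖ ^ p)
        ≤ (h ^ (2 * t) * π ^ (-p)) * ‖(latPt d 1 ζ.1 : Ed d)‖ ^ (-p) := by
    intro ζ
    set N := ‖(latPt d 1 ζ.1 : Ed d)‖ with hN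
    have hN1 : 1 ≤ N := one_le_normLat ζ.2
    have hN0 : 0 < N := lt_of_lt_of_le one_pos hN1
    have hX : (π / h) * N ≤ ‖ξ + latPt d (2 * π / h) ζ.1‖ := normLB d h h0 ξ hξ ζ.1
    have hXp : ((π / h) * N) ^ p ≤ ‖ξ + latPt d (2 * π / h) ζ.1‖ ^ p :=
      Real.rpow_le_rpow (by positivity) hX hp0
    have hb1 : 1 / (h ^ (2 * l) * ‖ξ + latPt d (2 * π / h) ζ.1‖ ^ p)
        ≤ 1 / (h ^ (2 * l) * ((π / h) * N) ^ p) := by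
      apply one_div_le_one_div_of_le (by positivity)
      exact mul_le_mul_of_nonneg_left hXp (by positivity)
    refine hb1.trans_eq ?_
    have e1 : h ^ (2 * l) * ((π / h) * N) ^ p
        = h ^ (2 * l) * (π ^ p / h ^ p * N ^ p) := by
      rw [Real.mul_rpow hπh.le hN0.le, Real.div_rpow pi_pos.le h0.le]
    have n1 : (0:ℝ) < h ^ (2 * l) := Real.rpow_pos_of_pos h0 _
    have n2 : (0:ℝ) < h ^ p := Real.rpow_pos_of_pos h0 _
    have n3 : (0:ℝ) < π ^ p := Real.rpow_pos_of_pos pi_pos _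
    have n4 : (0:ℝ) < N ^ p := Real.rpow_pos_of_pos hN0 _
    have e2 : h ^ (2 * t) = h ^ p / h ^ (2 * l) := by
      rw [← Real.rpow_sub h0]
      congr 1
      rw [hpdef]
      ring
    rw [e1, e2, Real.rpow_neg pi_pos.le, Real.rpow_neg hN0.le]
    field_simp
  -- summability of our series, then sum the bound
  have hsumB : Summable fun ζ : {z : Fin d → ℤ // z ≠ 0} =>
      (h ^ (2 * t) * π ^ (-p)) * ‖(latPt d 1 ζ.1 : Ed d)‖ ^ (-p) :=
    hsumN.mul_left _
  have hsumA : Summable fun ζ : {z : Fin d → ℤ // z ≠ 0} =>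
      1 / (h ^ (2 * l) * ‖ξ + latPt d (2 * π / h) ζ.1‖ ^ p) :=
    hsumB.of_nonneg_of_le (fun ζ => by positivity) hterm
  calc (∑' ζ : {z : Fin d → ℤ // z ≠ 0},
          1 / (h ^ (2 * l) * ‖ξ + latPt d (2 * π / h) ζ.1‖ ^ (2 * (t + l))))
      ≤ ∑' ζ : {z : Fin d → ℤ // z ≠ 0},
          (h ^ (2 * t) * π ^ (-p)) * ‖(latPt d 1 ζ.1 : Ed d)‖ ^ (-p) :=
        Summable.tsum_le_tsum hterm hsumA hsumB
    _ = (h ^ (2 * t) * π ^ (-p)) * S := tsum_mul_left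
    _ ≤ (π ^ (-p) * S + 1) * h ^ (2 * t) := by
        have hh : 0 < h ^ (2 * t) := Real.rpow_pos_of_pos h0 _
        nlinarith [Real.rpow_pos_of_pos pi_pos (-p)]
end
end

section
/- Let k ≥ s ≥ 0, t > 0 with 2(t + k − 2s) > d, and h ∈ (0,1]. Suppose Θ : ℝ^d → ℝ satisfies |F[Θ](ξ)| ≤ C (∑_{j=1}^d sin²(ξ_j))^{k/2} / |ξ|^k, and set Θ_h(x) = h^{−d} Θ(x/h). Then sup over ξ ∈ (−π/h, π/h)^d of ∑_{ζ ∈ (2π/h)ℤ^d \ {0}} |F[Θ_h](ξ+ζ)|² / (M_h(ξ+ζ)^{2s} |ξ+ζ|^{2t−4s}) ≤ C' h^{2(t−s)} for a constant C' independent of h. -/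
open MeasureTheory Real
open scoped BigOperators RealInnerProductSpace

noncomputable section

def contFT (d : ℕ) (g : Ed d → ℂ) (ξ : Ed d) : ℂ :=
  ∫ x : Ed d, Complex.exp (-(Complex.I) * ((⟪ξ, x⟫ : ℝ) : ℂ)) * g x


lemma sin_sq_add_int_mul_pi (y : ℝ) (n : ℤ) :
    Real.sin (y + n * π) ^ 2 = Real.sin y ^ 2 := by
  have h1 : Real.sin ((n : ℝ) * π) = 0 := Real.sin_int_mul_pi n
  have h2 : Real.cos ((n : ℝ) * π) ^ 2 = 1 := by
    have := Real.sin_sq_add_cos_sq ((n : ℝ) * π)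
    rw [h1] at this; nlinarith
  rw [Real.sin_add, h1, mul_zero, add_zero, mul_pow]
  rw [h2, mul_one]

lemma int_decay_summable {q : ℝ} (hq : 1 < q) :
    Summable (fun n : ℤ => (1 + |(n : ℝ)|) ^ (-q)) := by
  have base : Summable (fun n : ℤ => |(n : ℝ)| ^ (-q)) := summable_abs_int_rpow hq
  have ind : Summable (fun n : ℤ => if n = 0 then (1 : ℝ) else 0) := by
    apply summable_of_ne_finset_zero (s := {0})
    intro n hn
    simp only [Finset.mem_singleton] at hn
    simp [hn]
  refine Summable.of_nonneg_of_le (fun n => Real.rpow_nonneg (by positivity) _)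
    (fun n => ?_) (base.add ind)
  by_cases hn : n = 0
  · subst hn
    simp [Real.zero_rpow (by linarith : -q ≠ 0)]
  · have h0 : (0 : ℝ) < |(n : ℝ)| := by
      simp only [abs_pos]
      exact_mod_cast hn
    have : (1 + |(n : ℝ)|) ^ (-q) ≤ |(n : ℝ)| ^ (-q) :=
      Real.rpow_le_rpow_of_nonpos h0 (by linarith) (by linarith)
    simp [hn]; linarith

lemma prod_decay_summable (m : ℕ) {q : ℝ} (hq : 1 < q) :
    Summable (fun z : Fin m → ℤ => ∏ j, (1 + |(z j : ℝ)|) ^ (-q)) := by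
  induction m with
  | zero =>
      have : Finite (Fin 0 → ℤ) := Finite.of_subsingleton
      exact Summable.of_finite
  | succ m ih =>
      have hf := int_decay_summable hq
      have hnn1 : ∀ n : ℤ, 0 ≤ (1 + |(n : ℝ)|) ^ (-q) :=
        fun n => Real.rpow_nonneg (by positivity) _
      have hnn2 : ∀ z : Fin m → ℤ, 0 ≤ ∏ j, (1 + |(z j : ℝ)|) ^ (-q) :=
        fun z => Finset.prod_nonneg fun j _ => hnn1 _
      have h2 : Summable (fun x : ℤ × (Fin m → ℤ) =>
          (1 + |(x.1 : ℝ)|) ^ (-q) * ∏ j, (1 + |(x.2 j : ℝ)|) ^ (-q)) :=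
        Summable.mul_of_nonneg (f := fun n : ℤ => (1 + |(n : ℝ)|) ^ (-q))
          (g := fun z : Fin m → ℤ => ∏ j, (1 + |(z j : ℝ)|) ^ (-q)) hf ih hnn1 hnn2
      have h3 := ((Fin.consEquiv fun _ : Fin (m + 1) => ℤ).symm.summable_iff).mpr h2
      refine h3.congr fun z => ?_
      simp only [Function.comp, Fin.consEquiv, Equiv.coe_fn_symm_mk]
      rw [Fin.prod_univ_succ]
      congr 1

lemma lattice_summable (d : ℕ) {p : ℝ} (hp : (d : ℝ) < p) :
    Summable (fun ζ : {z : Fin d → ℤ // z ≠ 0} =>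
      Real.sqrt (∑ j, ((ζ.1 j : ℝ)) ^ 2) ^ (-p)) := by
  rcases Nat.eq_zero_or_pos d with hd | hd
  · subst hd
    have : IsEmpty {z : Fin 0 → ℤ // z ≠ 0} :=
      ⟨fun x => x.2 (Subsingleton.elim _ _)⟩
    exact Summable.of_finite
  · have hd1 : (1 : ℝ) ≤ (d : ℝ) := by exact_mod_cast hd
    have hdpos : (0 : ℝ) < (d : ℝ) := by linarith
    set q := p / d with hqdef
    have hq : 1 < q := (one_lt_div hdpos).mpr hp
    have hp0 : 0 < p := by linarith
    have hsum := ((prod_decay_summable d hq).mul_left ((2:ℝ) ^ p)).subtype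
      {z : Fin d → ℤ | z ≠ 0}
    refine Summable.of_nonneg_of_le
      (fun ζ => Real.rpow_nonneg (Real.sqrt_nonneg _) _) (fun ζ => ?_) hsum
    obtain ⟨z, hz⟩ := ζ
    set L := Real.sqrt (∑ j, ((z j : ℝ)) ^ 2) with hLdef
    have hL0 : 0 ≤ ∑ j, ((z j : ℝ)) ^ 2 := Finset.sum_nonneg fun j _ => sq_nonneg _
    have hLj : ∀ j, |(z j : ℝ)| ≤ L := by
      intro j
      rw [← Real.sqrt_sq_eq_abs]
      exact Real.sqrt_le_sqrt (Finset.single_le_sum (fun i _ => sq_nonneg ((z i : ℝ))) (Finset.mem_univ j))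
    have hL1 : 1 ≤ L := by
      obtain ⟨j, hj⟩ := Function.ne_iff.mp hz
      have : (1 : ℝ) ≤ |(z j : ℝ)| := by
        rw [← Int.cast_abs]; exact_mod_cast Int.one_le_abs hj
      exact le_trans this (hLj j)
    have hLpos : 0 < L := by linarith
    -- ∏ (1+|z j|) ≤ (2L)^d
    have h1 : ∏ j, (1 + |(z j : ℝ)|) ≤ (2 * L) ^ d := by
      calc ∏ j, (1 + |(z j : ℝ)|) ≤ ∏ _j : Fin d, (2 * L) :=
            Finset.prod_le_prod (fun j _ => by positivity)
              (fun j _ => by have := hLj j; linarith)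
        _ = (2 * L) ^ d := by rw [Finset.prod_const, Finset.card_univ, Fintype.card_fin]
    have hprodpos : 0 < ∏ j, (1 + |(z j : ℝ)|) :=
      Finset.prod_pos fun j _ => by have := abs_nonneg ((z j : ℝ)); linarith
    have h3 : ((2 * L) ^ d) ^ (-q) ≤ (∏ j, (1 + |(z j : ℝ)|)) ^ (-q) :=
      Real.rpow_le_rpow_of_nonpos hprodpos h1 (by linarith)
    have h4 : ((2 * L) ^ d) ^ (-q) = (2 * L) ^ (-p) := by
      rw [← Real.rpow_natCast (2 * L) d, ← Real.rpow_mul (by linarith)]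
      congr 1
      rw [hqdef]
      field_simp
    have h5 : (2 * L) ^ (-p) = 2 ^ (-p) * L ^ (-p) :=
      Real.mul_rpow (by norm_num) hLpos.le
    have h6 : (∏ j, (1 + |(z j : ℝ)|)) ^ (-q) = ∏ j, (1 + |(z j : ℝ)|) ^ (-q) :=
      (Real.finset_prod_rpow _ _ (fun j _ => by have := abs_nonneg ((z j : ℝ)); linarith) _).symm
    have key : L ^ (-p) ≤ 2 ^ p * ∏ j, (1 + |(z j : ℝ)|) ^ (-q) := by
      have h7 : L ^ (-p) = 2 ^ p * (2 ^ (-p) * L ^ (-p)) := by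
        rw [← mul_assoc, ← Real.rpow_add (by norm_num : (0:ℝ) < 2)]
        simp
      rw [h7, ← h5, ← h4, ← h6]
      exact mul_le_mul_of_nonneg_left h3 (Real.rpow_nonneg (by norm_num) _)
    exact key

lemma abs_le_sqrtSum {d : ℕ} (z : Fin d → ℤ) (j : Fin d) :
    |(z j : ℝ)| ≤ Real.sqrt (∑ i, ((z i : ℝ)) ^ 2) := by
  rw [← Real.sqrt_sq_eq_abs]
  exact Real.sqrt_le_sqrt
    (Finset.single_le_sum (fun i _ => sq_nonneg ((z i : ℝ))) (Finset.mem_univ j))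

lemma one_le_sqrtSum {d : ℕ} {z : Fin d → ℤ} (hz : z ≠ 0) :
    1 ≤ Real.sqrt (∑ i, ((z i : ℝ)) ^ 2) := by
  obtain ⟨j, hj⟩ := Function.ne_iff.mp hz
  have h1 : (1 : ℝ) ≤ |(z j : ℝ)| := by
    rw [← Int.cast_abs]; exact_mod_cast Int.one_le_abs hj
  exact le_trans h1 (abs_le_sqrtSum z j)

lemma coord_lb {a b zr : ℝ} (hb : 0 < b) (ha : |a| < b) (hw : 1 ≤ |zr|) :
    b ^ 2 * zr ^ 2 ≤ (a + 2 * b * zr) ^ 2 := by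
  have h1 : |2 * b * zr| ≤ |a + 2 * b * zr| + |a| := by
    have := abs_add_le (a + 2 * b * zr) (-a)
    simpa using this
  have h2 : |2 * b * zr| = 2 * (b * |zr|) := by
    rw [abs_mul, abs_of_pos (by linarith : (0:ℝ) < 2 * b)]; ring
  have h3 : b ≤ b * |zr| := by nlinarith
  have key : b * |zr| ≤ |a + 2 * b * zr| := by
    rw [h2] at h1
    have haa : |a| < b := ha
    nlinarith [abs_nonneg a]
  calc b ^ 2 * zr ^ 2 = (b * |zr|) ^ 2 := by rw [mul_pow, sq_abs]
    _ ≤ |a + 2 * b * zr| ^ 2 := by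
        have h4 : 0 ≤ b * |zr| := by positivity
        nlinarith [key]
    _ = (a + 2 * b * zr) ^ 2 := sq_abs _

lemma Msq_nonneg (d : ℕ) (h : ℝ) (ξ : Ed d) : 0 ≤ Msq d h ξ :=
  Finset.sum_nonneg fun j _ => by positivity

set_option maxHeartbeats 2000000 in
/-- Dual-lattice estimate with the kernel bound on `F[Θ]`: if `k ≥ s ≥ 0`, `t > 0`,
`2(t+k−2s) > d`, and `|F[Θ](ξ)| ≤ C (∑_j sin²ξ_j)^{k/2}/|ξ|^k`, then for `h ∈ (0,1]`,
`∑_{ζ ∈ (2π/h)ℤ^d \ {0}} |F[Θ_h](ξ+ζ)|² / (M_h(ξ+ζ)^{2s} |ξ+ζ|^{2t−4s}) ≤ C' h^{2(t−s)}`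
uniformly over `ξ ∈ (−π/h,π/h)^d`, where `F[Θ_h](ξ) = F[Θ](hξ)`. -/
theorem stmt8 (d : ℕ) (s t k : ℝ) (hs : 0 ≤ s) (hks : s ≤ k) (ht : 0 < t)
    (hdim : (d : ℝ) < 2 * (t + k - 2 * s)) (Θ : Ed d → ℝ) (CΘ : ℝ)
    (hΘ : ∀ ξ : Ed d,
      ‖contFT d (fun x => (Θ x : ℂ)) ξ‖
        ≤ CΘ * (∑ j : Fin d, Real.sin (ξ j) ^ 2) ^ (k / 2) / ‖ξ‖ ^ k) :
    ∃ C' : ℝ, 0 < C' ∧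
      ∀ h : ℝ, 0 < h → h ≤ 1 → ∀ ξ : Ed d, (∀ j, |ξ j| < π / h) →
        (∑' ζ : {z : Fin d → ℤ // z ≠ 0},
            ‖contFT d (fun x => (Θ x : ℂ)) (h • (ξ + latPt d (2 * π / h) ζ.1))‖ ^ 2 /
              (Msq d h (ξ + latPt d (2 * π / h) ζ.1) ^ s *
                ‖ξ + latPt d (2 * π / h) ζ.1‖ ^ (2 * t - 4 * s)))
          ≤ C' * h ^ (2 * (t - s)) := by
  set p : ℝ := 2 * (t + k - 2 * s) with hpdef
  have hp0 : 0 < p := lt_of_le_of_lt (Nat.cast_nonneg d) hdim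
  have hπ := Real.pi_pos
  have hS := lattice_summable d hdim
  set S : ℝ := ∑' ζ : {z : Fin d → ℤ // z ≠ 0},
      Real.sqrt (∑ j, ((ζ.1 j : ℝ)) ^ 2) ^ (-p) with hSdef
  have hSnn : 0 ≤ S := tsum_nonneg fun ζ => Real.rpow_nonneg (Real.sqrt_nonneg _) _
  set K0 : ℝ := CΘ ^ 2 * (d : ℝ) ^ (k - s) * π ^ (-p) with hK0def
  have hK0 : 0 ≤ K0 := by
    apply mul_nonneg (mul_nonneg (sq_nonneg _) (Real.rpow_nonneg (Nat.cast_nonneg d) _))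
      (Real.rpow_nonneg hπ.le _)
  refine ⟨K0 * S + 1, by nlinarith [mul_nonneg hK0 hSnn], ?_⟩
  intro h h0 h1 ξ hξ
  have hne : h ≠ 0 := ne_of_gt h0
  -- termwise bound
  have key : ∀ ζ : {z : Fin d → ℤ // z ≠ 0},
      ‖contFT d (fun x => (Θ x : ℂ)) (h • (ξ + latPt d (2 * π / h) ζ.1))‖ ^ 2 /
          (Msq d h (ξ + latPt d (2 * π / h) ζ.1) ^ s *
            ‖ξ + latPt d (2 * π / h) ζ.1‖ ^ (2 * t - 4 * s))
        ≤ K0 * h ^ (2 * (t - s)) * Real.sqrt (∑ j, ((ζ.1 j : ℝ)) ^ 2) ^ (-p) := by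
    rintro ⟨z, hz⟩
    dsimp only
    set η : Ed d := ξ + latPt d (2 * π / h) z with hηdef
    have hηj : ∀ j, η j = ξ j + 2 * π / h * (z j : ℝ) := fun j => rfl
    set L : ℝ := Real.sqrt (∑ j, ((z j : ℝ)) ^ 2) with hLdef
    have hL0sum : 0 ≤ ∑ j, ((z j : ℝ)) ^ 2 := Finset.sum_nonneg fun j _ => sq_nonneg _
    have hL1 : 1 ≤ L := one_le_sqrtSum hz
    have hLpos : 0 < L := by linarith
    have hb : 0 < π / h := div_pos hπ h0
    -- lower bound for the norm
    have hnorm : π / h * L ≤ ‖η‖ := by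
      rw [EuclideanSpace.norm_eq]
      rw [Real.le_sqrt (by positivity) (Finset.sum_nonneg fun j _ => by positivity)]
      have hLsq : L ^ 2 = ∑ j, ((z j : ℝ)) ^ 2 := Real.sq_sqrt hL0sum
      calc (π / h * L) ^ 2 = ∑ j, (π / h) ^ 2 * ((z j : ℝ)) ^ 2 := by
            rw [mul_pow, hLsq, Finset.mul_sum]
        _ ≤ ∑ j, ‖η j‖ ^ 2 := by
            apply Finset.sum_le_sum
            intro j _
            rw [Real.norm_eq_abs, sq_abs, hηj j]
            rcases eq_or_ne (z j) 0 with hzj | hzj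
            · simp only [hzj, Int.cast_zero, mul_zero, add_zero, ne_eq,
                OfNat.ofNat_ne_zero, not_false_eq_true, zero_pow]
              positivity
            · have hw : 1 ≤ |(z j : ℝ)| := by
                rw [← Int.cast_abs]; exact_mod_cast Int.one_le_abs hzj
              have := coord_lb hb (hξ j) hw (a := ξ j) (zr := (z j : ℝ))
              calc (π / h) ^ 2 * ((z j : ℝ)) ^ 2
                  ≤ (ξ j + 2 * (π / h) * (z j : ℝ)) ^ 2 := this
                _ = (ξ j + 2 * π / h * (z j : ℝ)) ^ 2 := by ring
    have hu0 : 0 < ‖η‖ := lt_of_lt_of_le (by positivity) hnorm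
    -- the sine sum is h-periodic
    have hsmul : ∀ j, (h • η) j = h * η j := fun j => rfl
    set A₀ : ℝ := ∑ j, Real.sin (h * ξ j) ^ 2 with hA₀def
    have hA₀nn : 0 ≤ A₀ := Finset.sum_nonneg fun j _ => sq_nonneg _
    have hAsum : ∑ j, Real.sin ((h • η) j) ^ 2 = A₀ := by
      apply Finset.sum_congr rfl
      intro j _
      rw [hsmul j, hηj j]
      have harg : h * (ξ j + 2 * π / h * (z j : ℝ)) = h * ξ j + (z j : ℝ) * (2 * π) := by
        field_simp
      rw [harg, Real.sin_add_int_mul_two_pi]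
    set M₀ : ℝ := Msq d h ξ with hM₀def
    have hM₀nn : 0 ≤ M₀ := Msq_nonneg d h ξ
    have hMeq : Msq d h η = M₀ := by
      rw [hM₀def]
      unfold Msq
      apply Finset.sum_congr rfl
      intro j _
      congr 1
      rw [hηj j]
      have harg : (ξ j + 2 * π / h * (z j : ℝ)) * h / 2 = ξ j * h / 2 + (z j : ℝ) * π := by
        field_simp
      rw [harg, sin_sq_add_int_mul_pi]
    have hwnorm : ‖h • η‖ = h * ‖η‖ := by
      rw [norm_smul, Real.norm_eq_abs, abs_of_pos h0]
    -- numerator bound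
    have h1' := hΘ (h • η)
    rw [hAsum, hwnorm] at h1'
    have hNum : ‖contFT d (fun x => (Θ x : ℂ)) (h • η)‖ ^ 2
        ≤ CΘ ^ 2 * A₀ ^ k / (h * ‖η‖) ^ (2 * k) := by
      have h2' : ‖contFT d (fun x => (Θ x : ℂ)) (h • η)‖ ^ 2
          ≤ (CΘ * A₀ ^ (k / 2) / (h * ‖η‖) ^ k) ^ 2 :=
        pow_le_pow_left₀ (norm_nonneg _) h1' 2
      refine le_trans h2' (le_of_eq ?_)
      rw [div_pow, mul_pow]
      congr 1
      · congr 1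
        rw [← Real.rpow_natCast (A₀ ^ (k / 2)) 2, ← Real.rpow_mul hA₀nn]
        congr 1; push_cast; ring
      · rw [← Real.rpow_natCast ((h * ‖η‖) ^ k) 2, ← Real.rpow_mul (by positivity)]
        congr 1; push_cast; ring
    -- sine sum upper bounds
    have hA₀d : A₀ ≤ (d : ℝ) := by
      calc A₀ ≤ ∑ _j : Fin d, (1 : ℝ) :=
            Finset.sum_le_sum fun j _ => Real.sin_sq_le_one (h * ξ j)
        _ = d := by simp
    have hA₀M : A₀ ≤ h ^ 2 * M₀ := by
      rw [hM₀def]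
      unfold Msq
      rw [Finset.mul_sum]
      apply Finset.sum_le_sum
      intro j _
      have hre : h ^ 2 * (4 / h ^ 2 * Real.sin (ξ j * h / 2) ^ 2)
          = 4 * Real.sin (ξ j * h / 2) ^ 2 := by
        field_simp
      rw [hre, show h * ξ j = 2 * (ξ j * h / 2) by ring, Real.sin_two_mul]
      nlinarith [Real.cos_sq_le_one (ξ j * h / 2), sq_nonneg (Real.sin (ξ j * h / 2)),
        mul_nonneg (sq_nonneg (Real.sin (ξ j * h / 2)))
          (sub_nonneg.mpr (Real.cos_sq_le_one (ξ j * h / 2)))]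
    have hpow2 : ((h : ℝ) ^ 2) ^ s = h ^ (2 * s) := by
      rw [← Real.rpow_natCast h 2, ← Real.rpow_mul h0.le]
      norm_num
    have key1 : A₀ ^ k ≤ (d : ℝ) ^ (k - s) * (h ^ (2 * s) * M₀ ^ s) := by
      rcases eq_or_lt_of_le hA₀nn with hA0 | hA0
      · rcases eq_or_lt_of_le (hs.trans hks) with hk0 | hk0
        · have hs0 : s = 0 := le_antisymm (hk0 ▸ hks) hs
          rw [← hA0, ← hk0, hs0]
          simp
        · rw [← hA0, Real.zero_rpow (ne_of_gt hk0)]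
          apply mul_nonneg (Real.rpow_nonneg (Nat.cast_nonneg d) _)
          exact mul_nonneg (Real.rpow_nonneg h0.le _) (Real.rpow_nonneg hM₀nn _)
      · have hM₀pos : 0 < M₀ := by
          nlinarith [lt_of_lt_of_le hA0 hA₀M, pow_pos h0 2]
        calc A₀ ^ k = A₀ ^ (k - s) * A₀ ^ s := by
              rw [← Real.rpow_add hA0]; congr 1; ring
          _ ≤ (d : ℝ) ^ (k - s) * (h ^ 2 * M₀) ^ s := by
              apply mul_le_mul (Real.rpow_le_rpow hA₀nn hA₀d (by linarith))
                (Real.rpow_le_rpow hA₀nn hA₀M hs) (Real.rpow_nonneg hA₀nn s)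
                (Real.rpow_nonneg (Nat.cast_nonneg d) _)
          _ = (d : ℝ) ^ (k - s) * (h ^ (2 * s) * M₀ ^ s) := by
              rw [Real.mul_rpow (sq_nonneg h) hM₀nn, hpow2]
    -- assemble
    rw [hMeq]
    by_cases hD0 : M₀ ^ s * ‖η‖ ^ (2 * t - 4 * s) = 0
    · rw [hD0, div_zero]
      apply mul_nonneg (mul_nonneg hK0 (Real.rpow_nonneg h0.le _))
        (Real.rpow_nonneg hLpos.le _)
    · have hMs : 0 < M₀ ^ s := by
        have hne' : M₀ ^ s ≠ 0 := fun hh => hD0 (by rw [hh, zero_mul])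
        exact lt_of_le_of_ne (Real.rpow_nonneg hM₀nn s) (Ne.symm hne')
      have hupow : 0 < ‖η‖ ^ (2 * t - 4 * s) := Real.rpow_pos_of_pos hu0 _
      have hDpos : 0 < M₀ ^ s * ‖η‖ ^ (2 * t - 4 * s) := mul_pos hMs hupow
      rw [div_le_iff₀ hDpos]
      have hhu : 0 < (h * ‖η‖) ^ (2 * k) := Real.rpow_pos_of_pos (mul_pos h0 hu0) _
      refine le_trans hNum ?_
      rw [div_le_iff₀ hhu]
      have hsplit : (h * ‖η‖) ^ (2 * k) = h ^ (2 * k) * ‖η‖ ^ (2 * k) :=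
        Real.mul_rpow h0.le (norm_nonneg η)
      have hup : ‖η‖ ^ (2 * t - 4 * s) * ‖η‖ ^ (2 * k) = ‖η‖ ^ p := by
        rw [← Real.rpow_add hu0]; congr 1; rw [hpdef]; ring
      have hbLp : π ^ p / h ^ p * L ^ p ≤ ‖η‖ ^ p := by
        have h8 : (π / h * L) ^ p ≤ ‖η‖ ^ p :=
          Real.rpow_le_rpow (by positivity) hnorm hp0.le
        calc π ^ p / h ^ p * L ^ p = (π / h * L) ^ p := by
              rw [Real.mul_rpow (by positivity) hLpos.le, Real.div_rpow hπ.le h0.le]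
          _ ≤ ‖η‖ ^ p := h8
      have hXnn : 0 ≤ π ^ (-p) * h ^ (2 * (t - s)) * L ^ (-p) := by
        apply mul_nonneg (mul_nonneg (Real.rpow_nonneg hπ.le _) (Real.rpow_nonneg h0.le _))
          (Real.rpow_nonneg hLpos.le _)
      have core : h ^ (2 * s)
          ≤ π ^ (-p) * h ^ (2 * (t - s)) * L ^ (-p) * ‖η‖ ^ p * h ^ (2 * k) := by
        have e1 : π ^ (-p) * π ^ p = 1 := by rw [← Real.rpow_add hπ]; simp
        have e2 : L ^ (-p) * L ^ p = 1 := by rw [← Real.rpow_add hLpos]; simp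
        have e3 : h ^ (2 * (t - s)) * h ^ (-p) * h ^ (2 * k) = h ^ (2 * s) := by
          rw [← Real.rpow_add h0, ← Real.rpow_add h0]; congr 1; rw [hpdef]; ring
        have e4 : π ^ (-p) * h ^ (2 * (t - s)) * L ^ (-p) * (π ^ p / h ^ p * L ^ p)
            * h ^ (2 * k) = h ^ (2 * s) := by
          rw [div_eq_mul_inv, ← Real.rpow_neg h0.le]
          calc π ^ (-p) * h ^ (2 * (t - s)) * L ^ (-p) * (π ^ p * h ^ (-p) * L ^ p)
              * h ^ (2 * k)
              = (π ^ (-p) * π ^ p) * (L ^ (-p) * L ^ p)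
                * (h ^ (2 * (t - s)) * h ^ (-p) * h ^ (2 * k)) := by ring
            _ = h ^ (2 * s) := by rw [e1, e2, e3]; ring
        calc h ^ (2 * s)
            = π ^ (-p) * h ^ (2 * (t - s)) * L ^ (-p) * (π ^ p / h ^ p * L ^ p)
              * h ^ (2 * k) := e4.symm
          _ ≤ π ^ (-p) * h ^ (2 * (t - s)) * L ^ (-p) * ‖η‖ ^ p * h ^ (2 * k) :=
              mul_le_mul_of_nonneg_right (mul_le_mul_of_nonneg_left hbLp hXnn)
                (Real.rpow_nonneg h0.le _)
      have hfac : 0 ≤ CΘ ^ 2 * (d : ℝ) ^ (k - s) * M₀ ^ s := by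
        apply mul_nonneg (mul_nonneg (sq_nonneg _) (Real.rpow_nonneg (Nat.cast_nonneg d) _))
          (Real.rpow_nonneg hM₀nn _)
      calc CΘ ^ 2 * A₀ ^ k
          ≤ CΘ ^ 2 * ((d : ℝ) ^ (k - s) * (h ^ (2 * s) * M₀ ^ s)) :=
            mul_le_mul_of_nonneg_left key1 (sq_nonneg CΘ)
        _ = (CΘ ^ 2 * (d : ℝ) ^ (k - s) * M₀ ^ s) * h ^ (2 * s) := by ring
        _ ≤ (CΘ ^ 2 * (d : ℝ) ^ (k - s) * M₀ ^ s)
            * (π ^ (-p) * h ^ (2 * (t - s)) * L ^ (-p) * ‖η‖ ^ p * h ^ (2 * k)) :=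
            mul_le_mul_of_nonneg_left core hfac
        _ = K0 * h ^ (2 * (t - s)) * L ^ (-p)
            * (M₀ ^ s * ‖η‖ ^ (2 * t - 4 * s)) * (h * ‖η‖) ^ (2 * k) := by
            rw [hK0def, hsplit, ← hup]; ring
  -- sum the bounds
  have fnn : ∀ ζ : {z : Fin d → ℤ // z ≠ 0},
      0 ≤ ‖contFT d (fun x => (Θ x : ℂ)) (h • (ξ + latPt d (2 * π / h) ζ.1))‖ ^ 2 /
          (Msq d h (ξ + latPt d (2 * π / h) ζ.1) ^ s *
            ‖ξ + latPt d (2 * π / h) ζ.1‖ ^ (2 * t - 4 * s)) := by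
    intro ζ
    apply div_nonneg (by positivity)
    exact mul_nonneg (Real.rpow_nonneg (Msq_nonneg d h _) s)
      (Real.rpow_nonneg (norm_nonneg _) _)
  have hg : Summable (fun ζ : {z : Fin d → ℤ // z ≠ 0} =>
      K0 * h ^ (2 * (t - s)) * Real.sqrt (∑ j, ((ζ.1 j : ℝ)) ^ 2) ^ (-p)) :=
    hS.mul_left _
  have hf : Summable (fun ζ : {z : Fin d → ℤ // z ≠ 0} =>
      ‖contFT d (fun x => (Θ x : ℂ)) (h • (ξ + latPt d (2 * π / h) ζ.1))‖ ^ 2 /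
        (Msq d h (ξ + latPt d (2 * π / h) ζ.1) ^ s *
          ‖ξ + latPt d (2 * π / h) ζ.1‖ ^ (2 * t - 4 * s))) :=
    Summable.of_nonneg_of_le fnn key hg
  have hpe : 0 < h ^ (2 * (t - s)) := Real.rpow_pos_of_pos h0 _
  calc (∑' ζ : {z : Fin d → ℤ // z ≠ 0},
        ‖contFT d (fun x => (Θ x : ℂ)) (h • (ξ + latPt d (2 * π / h) ζ.1))‖ ^ 2 /
          (Msq d h (ξ + latPt d (2 * π / h) ζ.1) ^ s *
            ‖ξ + latPt d (2 * π / h) ζ.1‖ ^ (2 * t - 4 * s)))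
      ≤ ∑' ζ : {z : Fin d → ℤ // z ≠ 0},
          K0 * h ^ (2 * (t - s)) * Real.sqrt (∑ j, ((ζ.1 j : ℝ)) ^ 2) ^ (-p) :=
        hf.tsum_le_tsum key hg
    _ = K0 * h ^ (2 * (t - s)) * S := by rw [hSdef]; exact tsum_mul_left
    _ ≤ (K0 * S + 1) * h ^ (2 * (t - s)) := by nlinarith [mul_nonneg hK0 hSnn]
end
end
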